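/- For every n ≥ 2, the cover graph G(L(Π_n)) of the face lattice of the permutahedron has a Hamiltonian cycle. -/

import Mathlib

/-!
The cover graph of the face lattice of the permutahedron `Π_n`.
Vertices are ordered set partitions of `[n]` (modeled as `Fin n`), plus an extra
vertex `none` playing the role of the empty face `⊥`.
-/

/-- `P` is an ordered set partition of `[n]`: a list of nonempty pairwise disjoint
subsets of `Fin n` whose union is all of `Fin n`. -/
def IsOSP (n : ℕ) (P : List (Finset (Fin n))) : Prop :=
  (∀ B ∈ P, B.Nonempty) ∧ P.Pairwise Disjoint ∧ ∀ x : Fin n, ∃ B ∈ P, x ∈ B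

/-- `Q` is obtained from `P` by merging two consecutive blocks into a single block,
keeping all other blocks unchanged. -/
def MergeStep {n : ℕ} (P Q : List (Finset (Fin n))) : Prop :=
  ∃ (L : List (Finset (Fin n))) (A B : Finset (Fin n)) (R : List (Finset (Fin n))),
    P = L ++ A :: B :: R ∧ Q = L ++ (A ∪ B) :: R

/-- Base relation of the cover graph of `L(Π_n)`: two ordered set partitions are related
if one is obtained from the other by merging two consecutive blocks; the empty face
`none` is related to exactly the partitions into singleton blocks (permutations). -/
def permFaceRel (n : ℕ) (u v : Option {P : List (Finset (Fin n)) // IsOSP n P}) : Prop :=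
  match u, v with
  | some P, some Q => MergeStep P.val Q.val
  | none, some P => ∀ B ∈ P.val, B.card = 1
  | _, _ => False

/-- The cover graph `G(L(Π_n))` of the face lattice of the permutahedron. -/
def permFaceGraph (n : ℕ) : SimpleGraph (Option {P : List (Finset (Fin n)) // IsOSP n P}) :=
  SimpleGraph.fromRel (permFaceRel n)

namespace PermFace

variable {n : ℕ}

def AdjM (P Q : List (Finset (Fin n))) : Prop := MergeStep P Q ∨ MergeStep Q P

lemma mergeStep_length_eq {P Q : List (Finset (Fin n))} (h : MergeStep P Q) :
    P.length = Q.length + 1 := by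
  obtain ⟨L, A, B, R, rfl, rfl⟩ := h
  simp; omega

lemma AdjM.ne {P Q : List (Finset (Fin n))} (h : AdjM P Q) : P ≠ Q := by
  rcases h with h | h <;> have := mergeStep_length_eq h <;> intro e <;> subst e <;> omega

lemma AdjM.symm {P Q : List (Finset (Fin n))} (h : AdjM P Q) : AdjM Q P := Or.symm h

lemma mergeStep_cons {P Q : List (Finset (Fin n))} (C : Finset (Fin n)) (h : MergeStep P Q) :
    MergeStep (C :: P) (C :: Q) := by
  obtain ⟨L, A, B, R, rfl, rfl⟩ := h
  exact ⟨C :: L, A, B, R, rfl, rfl⟩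

lemma mergeStep_concat {P Q : List (Finset (Fin n))} (D : Finset (Fin n)) (h : MergeStep P Q) :
    MergeStep (P ++ [D]) (Q ++ [D]) := by
  obtain ⟨L, A, B, R, rfl, rfl⟩ := h
  exact ⟨L, A, B, R ++ [D], by simp, by simp⟩

lemma AdjM.cons {P Q : List (Finset (Fin n))} (C : Finset (Fin n)) (h : AdjM P Q) :
    AdjM (C :: P) (C :: Q) := h.imp (mergeStep_cons C) (mergeStep_cons C)

lemma AdjM.concat {P Q : List (Finset (Fin n))} (D : Finset (Fin n)) (h : AdjM P Q) :
    AdjM (P ++ [D]) (Q ++ [D]) := h.imp (mergeStep_concat D) (mergeStep_concat D)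

/-- All ways to insert a fresh element `x` into an ordered set partition `P`,
listed along a zigzag path in the merge graph, from `{x} :: P` to `P ++ [{x}]`. -/
def extL (x : Fin n) : List (Finset (Fin n)) → List (List (Finset (Fin n)))
  | [] => [[{x}]]
  | B :: R => ({x} :: B :: R) :: (insert x B :: R) :: (extL x R).map (B :: ·)

lemma extL_ne_nil (x : Fin n) (P : List (Finset (Fin n))) : extL x P ≠ [] := by
  cases P <;> simp [extL]

lemma extL_head? (x : Fin n) (P : List (Finset (Fin n))) :
    (extL x P).head? = some ({x} :: P) := by
  cases P <;> rfl

lemma aux_getLast?_cons {α : Type*} (a : α) {l : List α} (h : l ≠ []) :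
    (a :: l).getLast? = l.getLast? := by
  cases l with
  | nil => exact absurd rfl h
  | cons b t => exact List.getLast?_cons_cons

lemma extL_getLast? (x : Fin n) (P : List (Finset (Fin n))) :
    (extL x P).getLast? = some (P ++ [{x}]) := by
  induction P with
  | nil => rfl
  | cons B R ih =>
    rw [extL, aux_getLast?_cons _ (by simp [extL_ne_nil]),
      aux_getLast?_cons _ (by simp [extL_ne_nil]), List.getLast?_map, ih]
    rfl

lemma extL_cons_decomp (x : Fin n) (P : List (Finset (Fin n))) :
    ∃ t, extL x P = ({x} :: P) :: t := by
  cases hE : extL x P with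
  | nil => exact absurd hE (extL_ne_nil x P)
  | cons c t =>
    have h := extL_head? x P
    rw [hE] at h
    simp only [List.head?_cons, Option.some.injEq] at h
    exact ⟨t, by rw [h]⟩

lemma extL_chain' (x : Fin n) (P : List (Finset (Fin n))) :
    (extL x P).Chain' (AdjM (n := n)) := by
  induction P with
  | nil => simp [extL, List.Chain']
  | cons B R ih =>
    obtain ⟨t, ht⟩ := extL_cons_decomp x R
    rw [extL, ht, List.map_cons]
    refine List.isChain_cons_cons.mpr ⟨?_, List.isChain_cons_cons.mpr ⟨?_, ?_⟩⟩
    · exact Or.inl ⟨[], {x}, B, R, rfl, by rw [← Finset.insert_eq]; rfl⟩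
    · exact Or.inr ⟨[], B, {x}, R, rfl, by
        rw [Finset.union_comm, ← Finset.insert_eq]; rfl⟩
    · rw [← List.map_cons, ← ht]
      exact (List.isChain_map _).mpr (ih.imp fun a b hab => AdjM.cons B hab)

lemma extL_length (x : Fin n) (P : List (Finset (Fin n))) :
    (extL x P).length = 2 * P.length + 1 := by
  induction P with
  | nil => rfl
  | cons B R ih => simp [extL, ih]; omega

def IsOSPOn (S : Finset (Fin n)) (P : List (Finset (Fin n))) : Prop :=
  (∀ B ∈ P, B.Nonempty) ∧ P.Pairwise Disjoint ∧ ∀ y : Fin n, y ∈ S ↔ ∃ B ∈ P, y ∈ B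

lemma isOSPOn_univ_iff {P : List (Finset (Fin n))} :
    IsOSPOn (Finset.univ) P ↔ IsOSP n P := by
  unfold IsOSPOn IsOSP
  simp

lemma mem_extL {x : Fin n} : ∀ {P Q : List (Finset (Fin n))}, Q ∈ extL x P ↔
    ((∃ L R, P = L ++ R ∧ Q = L ++ {x} :: R) ∨
      (∃ L C R, P = L ++ C :: R ∧ Q = L ++ insert x C :: R)) := by
  intro P
  induction P with
  | nil =>
    intro Q
    simp only [extL, List.mem_singleton]
    constructor
    · rintro rfl
      exact Or.inl ⟨[], [], rfl, rfl⟩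
    · rintro (⟨L, R, hP, rfl⟩ | ⟨L, C, R, hP, rfl⟩)
      · rcases List.append_eq_nil_iff.mp hP.symm with ⟨rfl, rfl⟩
        rfl
      · exact absurd hP.symm (by simp)
  | cons B R ih =>
    intro Q
    simp only [extL, List.mem_cons, List.mem_map]
    constructor
    · rintro (rfl | rfl | ⟨Q', hQ', rfl⟩)
      · exact Or.inl ⟨[], B :: R, rfl, rfl⟩
      · exact Or.inr ⟨[], B, R, rfl, rfl⟩
      · rcases ih.mp hQ' with ⟨L, R', hR, rfl⟩ | ⟨L, C, R', hR, rfl⟩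
        · exact Or.inl ⟨B :: L, R', by rw [hR]; rfl, rfl⟩
        · exact Or.inr ⟨B :: L, C, R', by rw [hR]; rfl, rfl⟩
    · rintro (⟨L, R', hP, rfl⟩ | ⟨L, C, R', hP, rfl⟩)
      · cases L with
        | nil =>
          simp only [List.nil_append] at hP ⊢
          subst hP
          exact Or.inl rfl
        | cons D L' =>
          simp only [List.cons_append, List.cons.injEq] at hP
          obtain ⟨rfl, hR⟩ := hP
          exact Or.inr (Or.inr ⟨L' ++ {x} :: R', ih.mpr (Or.inl ⟨L', R', hR, rfl⟩), rfl⟩)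
      · cases L with
        | nil =>
          simp only [List.nil_append, List.cons.injEq] at hP ⊢
          obtain ⟨rfl, rfl⟩ := hP
          exact Or.inr (Or.inl ⟨rfl, rfl⟩)
        | cons D L' =>
          simp only [List.cons_append, List.cons.injEq] at hP
          obtain ⟨rfl, hR⟩ := hP
          exact Or.inr (Or.inr ⟨L' ++ insert x C :: R', ih.mpr (Or.inr ⟨L', C, R', hR, rfl⟩), rfl⟩)

lemma blocks_subset {S : Finset (Fin n)} {P : List (Finset (Fin n))}
    (hP : IsOSPOn S P) : ∀ B ∈ P, ∀ y ∈ B, y ∈ S :=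
  fun B hB y hy => (hP.2.2 y).mpr ⟨B, hB, hy⟩

lemma x_not_mem_blocks {S : Finset (Fin n)} {x : Fin n} (hx : x ∉ S)
    {P : List (Finset (Fin n))} (hP : IsOSPOn S P) : ∀ B ∈ P, x ∉ B :=
  fun B hB hxB => hx (blocks_subset hP B hB x hxB)

lemma isOSPOn_extL {S : Finset (Fin n)} {x : Fin n} (hx : x ∉ S)
    {P Q : List (Finset (Fin n))} (hP : IsOSPOn S P) (hQ : Q ∈ extL x P) :
    IsOSPOn (insert x S) Q := by
  have hxB := x_not_mem_blocks hx hP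
  obtain ⟨hne, hpw, hmem⟩ := hP
  rcases mem_extL.mp hQ with ⟨L, R, rfl, rfl⟩ | ⟨L, C, R, rfl, rfl⟩
  · rw [List.pairwise_append] at hpw
    obtain ⟨hL, hR, hLR⟩ := hpw
    refine ⟨?_, ?_, ?_⟩
    · intro B hB
      rcases List.mem_append.mp hB with h | h
      · exact hne B (List.mem_append.mpr (Or.inl h))
      · rcases List.mem_cons.mp h with rfl | h
        · exact ⟨x, Finset.mem_singleton_self x⟩
        · exact hne B (List.mem_append.mpr (Or.inr h))
    · rw [List.pairwise_append, List.pairwise_cons]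
      refine ⟨hL, ⟨?_, hR⟩, ?_⟩
      · intro B hB
        rw [Finset.disjoint_singleton_left]
        exact hxB B (List.mem_append.mpr (Or.inr hB))
      · intro A hA B hB
        rcases List.mem_cons.mp hB with rfl | hB
        · rw [Finset.disjoint_singleton_right]
          exact hxB A (List.mem_append.mpr (Or.inl hA))
        · exact hLR A hA B hB
    · intro y
      rw [Finset.mem_insert, hmem y]
      constructor
      · rintro (hyx | ⟨B, hB, hyB⟩)
        · exact ⟨{x}, by simp, by rw [hyx]; exact Finset.mem_singleton_self x⟩
        · rcases List.mem_append.mp hB with h | h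
          · exact ⟨B, List.mem_append.mpr (Or.inl h), hyB⟩
          · exact ⟨B, by simp [h], hyB⟩
      · rintro ⟨B, hB, hyB⟩
        rcases List.mem_append.mp hB with h | h
        · exact Or.inr ⟨B, List.mem_append.mpr (Or.inl h), hyB⟩
        · rcases List.mem_cons.mp h with rfl | h
          · exact Or.inl (Finset.mem_singleton.mp hyB)
          · exact Or.inr ⟨B, List.mem_append.mpr (Or.inr h), hyB⟩
  · rw [List.pairwise_append, List.pairwise_cons] at hpw
    obtain ⟨hL, ⟨hCR, hR⟩, hLR⟩ := hpw
    have hxC : x ∉ C := hxB C (by simp)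
    refine ⟨?_, ?_, ?_⟩
    · intro B hB
      rcases List.mem_append.mp hB with h | h
      · exact hne B (List.mem_append.mpr (Or.inl h))
      · rcases List.mem_cons.mp h with rfl | h
        · exact ⟨x, Finset.mem_insert_self x C⟩
        · exact hne B (by simp [h])
    · rw [List.pairwise_append, List.pairwise_cons]
      refine ⟨hL, ⟨?_, hR⟩, ?_⟩
      · intro B hB
        rw [Finset.disjoint_insert_left]
        exact ⟨hxB B (by simp [hB]), hCR B hB⟩
      · intro A hA B hB
        rcases List.mem_cons.mp hB with rfl | hB
        · rw [Finset.disjoint_insert_right]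
          exact ⟨hxB A (List.mem_append.mpr (Or.inl hA)),
            hLR A hA C (by simp)⟩
        · exact hLR A hA B (by simp [hB])
    · intro y
      rw [Finset.mem_insert, hmem y]
      constructor
      · rintro (hyx | ⟨B, hB, hyB⟩)
        · exact ⟨insert x C, by simp, by rw [hyx]; exact Finset.mem_insert_self x C⟩
        · rcases List.mem_append.mp hB with h | h
          · exact ⟨B, List.mem_append.mpr (Or.inl h), hyB⟩
          · rcases List.mem_cons.mp h with rfl | h
            · exact ⟨insert x B, by simp, Finset.mem_insert_of_mem hyB⟩
            · exact ⟨B, by simp [h], hyB⟩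
      · rintro ⟨B, hB, hyB⟩
        rcases List.mem_append.mp hB with h | h
        · exact Or.inr ⟨B, List.mem_append.mpr (Or.inl h), hyB⟩
        · rcases List.mem_cons.mp h with rfl | h
          · rcases Finset.mem_insert.mp hyB with rfl | hyC
            · exact Or.inl rfl
            · exact Or.inr ⟨C, by simp, hyC⟩
          · exact Or.inr ⟨B, by simp [h], hyB⟩

lemma exists_extL_of_isOSPOn {S : Finset (Fin n)} {x : Fin n} (hx : x ∉ S)
    {Q : List (Finset (Fin n))} (hQ : IsOSPOn (insert x S) Q) :
    ∃ P, IsOSPOn S P ∧ Q ∈ extL x P := by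
  obtain ⟨hne, hpw, hmem⟩ := hQ
  obtain ⟨C, hC, hxC⟩ := (hmem x).mp (Finset.mem_insert_self x S)
  obtain ⟨L, R, hQeq⟩ := List.append_of_mem hC
  subst hQeq
  rw [List.pairwise_append, List.pairwise_cons] at hpw
  obtain ⟨hL, ⟨hCR, hR⟩, hLR⟩ := hpw
  -- `x` is not in any other block
  have hxL : ∀ B ∈ L, x ∉ B := fun B hB hxB =>
    Finset.disjoint_left.mp (hLR B hB C (by simp)) hxB hxC
  have hxR : ∀ B ∈ R, x ∉ B := fun B hB hxB =>
    Finset.disjoint_left.mp (hCR B hB) hxC hxB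
  -- blocks other than `C` are included in `S`
  have hsub : ∀ B ∈ L ++ R, ∀ y ∈ B, y ∈ S := by
    intro B hB y hyB
    have hxnB : x ∉ B := by
      rcases List.mem_append.mp hB with h | h
      · exact hxL B h
      · exact hxR B h
    have : y ∈ insert x S := (hmem y).mpr ⟨B, by
      rcases List.mem_append.mp hB with h | h
      · exact List.mem_append.mpr (Or.inl h)
      · exact List.mem_append.mpr (Or.inr (List.mem_cons_of_mem _ h)), hyB⟩
    rcases Finset.mem_insert.mp this with rfl | h
    · exact absurd hyB hxnB
    · exact h
  have hneLR : ∀ B ∈ L ++ R, B.Nonempty := by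
    intro B hB
    rcases List.mem_append.mp hB with h | h
    · exact hne B (List.mem_append.mpr (Or.inl h))
    · exact hne B (by simp [h])
  by_cases hC1 : C = {x}
  · refine ⟨L ++ R, ⟨hneLR, ?_, ?_⟩, mem_extL.mpr (Or.inl ⟨L, R, rfl, by rw [hC1]⟩)⟩
    · rw [List.pairwise_append]
      exact ⟨hL, hR, fun A hA B hB => hLR A hA B (by simp [hB])⟩
    · intro y
      constructor
      · intro hyS
        obtain ⟨B, hB, hyB⟩ := (hmem y).mp (Finset.mem_insert_of_mem hyS)
        rcases List.mem_append.mp hB with h | h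
        · exact ⟨B, List.mem_append.mpr (Or.inl h), hyB⟩
        · rcases List.mem_cons.mp h with rfl | h
          · rw [hC1] at hyB
            exact absurd (Finset.mem_singleton.mp hyB ▸ hyS) hx
          · exact ⟨B, List.mem_append.mpr (Or.inr h), hyB⟩
      · rintro ⟨B, hB, hyB⟩
        exact hsub B hB y hyB
  · refine ⟨L ++ C.erase x :: R, ⟨?_, ?_, ?_⟩,
      mem_extL.mpr (Or.inr ⟨L, C.erase x, R, rfl, by rw [Finset.insert_erase hxC]⟩)⟩
    · intro B hB
      rcases List.mem_append.mp hB with h | h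
      · exact hneLR B (List.mem_append.mpr (Or.inl h))
      · rcases List.mem_cons.mp h with rfl | h
        · obtain ⟨y, hyC, hyx⟩ : ∃ y ∈ C, y ≠ x := by
            by_contra hcon
            push_neg at hcon
            exact hC1 (Finset.eq_singleton_iff_unique_mem.mpr ⟨hxC, fun y hy =>
              hcon y hy⟩)
          exact ⟨y, Finset.mem_erase.mpr ⟨hyx, hyC⟩⟩
        · exact hneLR B (List.mem_append.mpr (Or.inr h))
    · rw [List.pairwise_append, List.pairwise_cons]
      refine ⟨hL, ⟨fun B hB => Finset.disjoint_of_subset_left (Finset.erase_subset x C)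
        (hCR B hB), hR⟩, ?_⟩
      intro A hA B hB
      rcases List.mem_cons.mp hB with rfl | hB
      · exact Finset.disjoint_of_subset_right (Finset.erase_subset x C)
          (hLR A hA C (by simp))
      · exact hLR A hA B (by simp [hB])
    · intro y
      constructor
      · intro hyS
        obtain ⟨B, hB, hyB⟩ := (hmem y).mp (Finset.mem_insert_of_mem hyS)
        rcases List.mem_append.mp hB with h | h
        · exact ⟨B, List.mem_append.mpr (Or.inl h), hyB⟩
        · rcases List.mem_cons.mp h with rfl | h
          · refine ⟨B.erase x, by simp, Finset.mem_erase.mpr ⟨?_, hyB⟩⟩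
            rintro rfl
            exact hx hyS
          · exact ⟨B, by simp [h], hyB⟩
      · rintro ⟨B, hB, hyB⟩
        rcases List.mem_append.mp hB with h | h
        · exact hsub B (List.mem_append.mpr (Or.inl h)) y hyB
        · rcases List.mem_cons.mp h with rfl | h
          · have hyC := Finset.mem_of_mem_erase hyB
            have hyx := Finset.ne_of_mem_erase hyB
            have : y ∈ insert x S := (hmem y).mpr ⟨C, by simp, hyC⟩
            rcases Finset.mem_insert.mp this with rfl | h
            · exact absurd rfl hyx
            · exact h
          · exact hsub B (List.mem_append.mpr (Or.inr h)) y hyB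

/-- Remove `x` from an ordered set partition, dropping the block if it becomes empty. -/
def projL (x : Fin n) (Q : List (Finset (Fin n))) : List (Finset (Fin n)) :=
  (Q.map fun C => C.erase x).filter fun C => decide (C ≠ ∅)

lemma projL_extL {x : Fin n} {P Q : List (Finset (Fin n))}
    (hne : ∀ B ∈ P, B.Nonempty) (hx : ∀ B ∈ P, x ∉ B) (hQ : Q ∈ extL x P) :
    projL x Q = P := by
  have keep : ∀ (M : List (Finset (Fin n))), (∀ B ∈ M, B.Nonempty) → (∀ B ∈ M, x ∉ B) →
      projL x M = M := by
    intro M h1 h2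
    unfold projL
    rw [List.map_congr_left (fun B hB => Finset.erase_eq_of_notMem (h2 B hB)), List.map_id']
    rw [List.filter_eq_self]
    intro B hB
    simpa using (h1 B hB).ne_empty
  rcases mem_extL.mp hQ with ⟨L, R, rfl, rfl⟩ | ⟨L, C, R, rfl, rfl⟩
  · have hL : ∀ B ∈ L, B.Nonempty := fun B hB => hne B (by simp [hB])
    have hR : ∀ B ∈ R, B.Nonempty := fun B hB => hne B (by simp [hB])
    have hxL : ∀ B ∈ L, x ∉ B := fun B hB => hx B (by simp [hB])
    have hxR : ∀ B ∈ R, x ∉ B := fun B hB => hx B (by simp [hB])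
    unfold projL
    rw [List.map_append, List.filter_append, List.map_cons, Finset.erase_singleton]
    rw [show (List.filter (fun C => decide (C ≠ ∅)) (∅ :: R.map fun C => C.erase x)) =
      List.filter (fun C => decide (C ≠ ∅)) (R.map fun C => C.erase x) by simp]
    have l1 := keep L hL hxL
    have l2 := keep R hR hxR
    unfold projL at l1 l2
    rw [l1, l2]
  · have hL : ∀ B ∈ L, B.Nonempty := fun B hB => hne B (by simp [hB])
    have hR : ∀ B ∈ R, B.Nonempty := fun B hB => hne B (by simp [hB])
    have hxL : ∀ B ∈ L, x ∉ B := fun B hB => hx B (by simp [hB])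
    have hxR : ∀ B ∈ R, x ∉ B := fun B hB => hx B (by simp [hB])
    have hxC : x ∉ C := hx C (by simp)
    have hCne : C.Nonempty := hne C (by simp)
    unfold projL
    rw [List.map_append, List.filter_append, List.map_cons, Finset.erase_insert hxC]
    rw [show (List.filter (fun C => decide (C ≠ ∅)) (C :: R.map fun B => B.erase x)) =
      C :: List.filter (fun C => decide (C ≠ ∅)) (R.map fun B => B.erase x) by
        simp [List.filter_cons, hCne.ne_empty]]
    have l1 := keep L hL hxL
    have l2 := keep R hR hxR
    unfold projL at l1 l2
    rw [l1, l2]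

lemma extL_inj {x : Fin n} {P P' Q : List (Finset (Fin n))}
    (hne : ∀ B ∈ P, B.Nonempty) (hx : ∀ B ∈ P, x ∉ B)
    (hne' : ∀ B ∈ P', B.Nonempty) (hx' : ∀ B ∈ P', x ∉ B)
    (h : Q ∈ extL x P) (h' : Q ∈ extL x P') : P = P' := by
  rw [← projL_extL hne hx h, ← projL_extL hne' hx' h']

lemma extL_nodup {x : Fin n} : ∀ {P : List (Finset (Fin n))},
    (∀ B ∈ P, x ∉ B) → (extL x P).Nodup := by
  intro P
  induction P with
  | nil => intro _; simp [extL]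
  | cons B R ih =>
    intro hx
    have hxB : x ∉ B := hx B (by simp)
    rw [extL]
    refine List.nodup_cons.mpr ⟨?_, List.nodup_cons.mpr ⟨?_, ?_⟩⟩
    · intro hmem
      rcases List.mem_cons.mp hmem with h | h
      · have := congrArg List.length h
        simp at this
      · obtain ⟨Q', _, hQ'⟩ := List.mem_map.mp h
        have : {x} = B := (List.cons.injEq _ _ _ _).mp hQ'.symm |>.1
        exact hxB (this ▸ Finset.mem_singleton_self x)
    · intro h
      obtain ⟨Q', _, hQ'⟩ := List.mem_map.mp h
      have : B = insert x B := (List.cons.injEq _ _ _ _).mp hQ' |>.1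
      exact hxB (this ▸ Finset.mem_insert_self x B)
    · exact (ih (fun A hA => hx A (by simp [hA]))).map List.cons_injective

/-- Boustrophedon concatenation of the insertion paths along a list of partitions. -/
def bous (x : Fin n) : Bool → List (List (Finset (Fin n))) → List (List (Finset (Fin n)))
  | _, [] => []
  | false, P :: ps => extL x P ++ bous x true ps
  | true, P :: ps => (extL x P).reverse ++ bous x false ps

lemma bous_ne_nil (x : Fin n) {ps : List (List (Finset (Fin n)))} (h : ps ≠ []) (b : Bool) :
    bous x b ps ≠ [] := by
  cases ps with
  | nil => exact absurd rfl h
  | cons P ps =>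
    cases b <;> simp [bous, extL_ne_nil]

lemma mem_bous {x : Fin n} {Q : List (Finset (Fin n))} :
    ∀ {ps : List (List (Finset (Fin n)))} {b : Bool},
    Q ∈ bous x b ps ↔ ∃ P ∈ ps, Q ∈ extL x P := by
  intro ps
  induction ps with
  | nil => intro b; cases b <;> simp [bous]
  | cons P ps ih =>
    intro b
    cases b <;> simp [bous, List.mem_append, ih] <;> tauto

lemma bous_head? (x : Fin n) (P : List (Finset (Fin n))) (ps : List (List (Finset (Fin n)))) :
    (bous x false (P :: ps)).head? = some ({x} :: P) := by
  rw [bous, List.head?_append_of_ne_nil _ (extL_ne_nil x P), extL_head?]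

lemma bous_getLast? (x : Fin n) :
    ∀ (ps : List (List (Finset (Fin n)))) (P0 : List (Finset (Fin n))),
    ps.getLast? = some P0 →
    ((bous x false ps).getLast? =
      some (if ps.length % 2 = 1 then P0 ++ [{x}] else {x} :: P0)) ∧
    ((bous x true ps).getLast? =
      some (if ps.length % 2 = 1 then {x} :: P0 else P0 ++ [{x}])) := by
  intro ps
  induction ps with
  | nil => intro P0 h; simp at h
  | cons P ps ih =>
    intro P0 h
    cases ps with
    | nil =>
      simp only [List.getLast?_singleton, Option.some.injEq] at h
      subst h
      constructor
      · rw [bous, bous, List.append_nil, extL_getLast?]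
        simp
      · rw [bous, bous, List.append_nil, List.getLast?_reverse, extL_head?]
        simp
    | cons P' ps' =>
      have hne : (P' :: ps') ≠ [] := by simp
      have hlast : (P' :: ps').getLast? = some P0 := by
        rw [← h, aux_getLast?_cons _ hne]
      obtain ⟨ih1, ih2⟩ := ih P0 hlast
      have hlen : (P :: P' :: ps').length = (P' :: ps').length + 1 := rfl
      constructor
      · rw [bous, List.getLast?_append_of_ne_nil _ (bous_ne_nil x hne true), ih2, hlen]
        rcases Nat.even_or_odd (P' :: ps').length with he | ho
        · obtain ⟨k, hk⟩ := he
          have h1 : (P' :: ps').length % 2 = 0 := by omega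
          have h2 : ((P' :: ps').length + 1) % 2 = 1 := by omega
          rw [h1, h2]
          simp
        · obtain ⟨k, hk⟩ := ho
          have h1 : (P' :: ps').length % 2 = 1 := by omega
          have h2 : ((P' :: ps').length + 1) % 2 = 0 := by omega
          rw [h1, h2]
          simp
      · rw [bous, List.getLast?_append_of_ne_nil _ (bous_ne_nil x hne false), ih1, hlen]
        rcases Nat.even_or_odd (P' :: ps').length with he | ho
        · obtain ⟨k, hk⟩ := he
          have h1 : (P' :: ps').length % 2 = 0 := by omega
          have h2 : ((P' :: ps').length + 1) % 2 = 1 := by omega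
          rw [h1, h2]
          simp
        · obtain ⟨k, hk⟩ := ho
          have h1 : (P' :: ps').length % 2 = 1 := by omega
          have h2 : ((P' :: ps').length + 1) % 2 = 0 := by omega
          rw [h1, h2]
          simp

lemma bous_length_parity (x : Fin n) :
    ∀ (ps : List (List (Finset (Fin n)))) (b : Bool),
    (bous x b ps).length % 2 = ps.length % 2 := by
  intro ps
  induction ps with
  | nil => intro b; cases b <;> rfl
  | cons P ps ih =>
    intro b
    cases b <;>
      simp only [bous, List.length_append, List.length_reverse, extL_length, List.length_cons] <;>
      [have := ih true; have := ih false] <;> omega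

lemma bous_chain' (x : Fin n) :
    ∀ (ps : List (List (Finset (Fin n)))) (b : Bool), ps.Chain' (AdjM (n := n)) →
    (bous x b ps).Chain' (AdjM (n := n)) := by
  intro ps
  induction ps with
  | nil => intro b _; cases b <;> simp [bous, List.Chain']
  | cons P ps ih =>
    intro b hch
    have hch' : ps.Chain' (AdjM (n := n)) := hch.tail
    have hlink : ∀ P' ∈ ps.head?, AdjM P P' := List.isChain_cons.mp hch |>.1
    cases b
    · rw [bous]
      unfold List.Chain'
      rw [List.isChain_append]
      refine ⟨extL_chain' x P, ih true hch', ?_⟩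
      intro a ha q hq
      cases ps with
      | nil => simp [bous] at hq
      | cons P' ps' =>
        rw [extL_getLast?] at ha
        rw [bous, List.head?_append_of_ne_nil _ (by simp [extL_ne_nil]),
          List.head?_reverse, extL_getLast?] at hq
        simp only [Option.mem_def, Option.some.injEq] at ha hq
        subst ha; subst hq
        exact AdjM.concat _ (hlink P' (by simp))
    · rw [bous]
      unfold List.Chain'
      rw [List.isChain_append]
      refine ⟨?_, ih false hch', ?_⟩
      · rw [List.isChain_reverse]
        exact (extL_chain' x P).imp fun a b h => h.symm
      · intro a ha q hq
        cases ps with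
        | nil => simp [bous] at hq
        | cons P' ps' =>
          rw [List.getLast?_reverse, extL_head?] at ha
          rw [bous_head?] at hq
          simp only [Option.mem_def, Option.some.injEq] at ha hq
          subst ha; subst hq
          exact AdjM.cons _ (hlink P' (by simp))

lemma bous_nodup (x : Fin n) :
    ∀ (ps : List (List (Finset (Fin n)))) (b : Bool), ps.Nodup →
    (∀ P ∈ ps, ∀ B ∈ P, B.Nonempty) → (∀ P ∈ ps, ∀ B ∈ P, x ∉ B) →
    (bous x b ps).Nodup := by
  intro ps
  induction ps with
  | nil => intro b _ _ _; cases b <;> simp [bous]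
  | cons P ps ih =>
    intro b hnd hne hx
    have hP_ne := hne P (by simp)
    have hP_x := hx P (by simp)
    have hnd' : ps.Nodup := (List.nodup_cons.mp hnd).2
    have hPnotin : P ∉ ps := (List.nodup_cons.mp hnd).1
    have hdisj : ∀ Q ∈ extL x P, Q ∉ bous x (!b) ps := by
      intro Q hQ hQ'
      obtain ⟨P', hP', hQ''⟩ := mem_bous.mp hQ'
      have : P = P' := extL_inj hP_ne hP_x (hne P' (by simp [hP'])) (hx P' (by simp [hP']))
        hQ hQ''
      exact hPnotin (this ▸ hP')
    have hrec := ih (!b) hnd' (fun P hP => hne P (by simp [hP])) (fun P hP => hx P (by simp [hP]))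
    cases b
    · rw [bous]
      exact List.Nodup.append (extL_nodup hP_x) hrec hdisj
    · rw [bous]
      refine List.Nodup.append (List.nodup_reverse.mpr (extL_nodup hP_x)) hrec ?_
      intro Q hQ
      exact hdisj Q (List.mem_reverse.mp hQ)

/-- The bundle of properties carried through the induction: `ps` lists all ordered set
partitions of `S` exactly once, consecutive entries differ by a merge, both endpoints
are partitions into singletons, and the endpoints differ when `S` has ≥ 2 elements. -/
def Good (S : Finset (Fin n)) (ps : List (List (Finset (Fin n)))) : Prop :=
  (∀ P, P ∈ ps ↔ IsOSPOn S P) ∧ ps.Nodup ∧ ps.Chain' (AdjM (n := n)) ∧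
    ps.length % 2 = 1 ∧
    (∃ h0, ps.head? = some h0 ∧ (∀ B ∈ h0, B.card = 1)) ∧
    (∃ t0, ps.getLast? = some t0 ∧ (∀ B ∈ t0, B.card = 1) ∧
      (1 < S.card → ps.head? ≠ some t0))

lemma isOSPOn_singleton {x : Fin n} {P : List (Finset (Fin n))} :
    IsOSPOn {x} P ↔ P = [{x}] := by
  constructor
  · rintro ⟨hne, hpw, hmem⟩
    have hblock : ∀ B ∈ P, B = {x} := by
      intro B hB
      have hsub : B ⊆ {x} := fun y hy => by
        rw [Finset.mem_singleton]
        have := (hmem y).mpr ⟨B, hB, hy⟩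
        exact Finset.mem_singleton.mp this
      rcases Finset.subset_singleton_iff.mp hsub with h | h
      · exact absurd h (hne B hB).ne_empty
      · exact h
    obtain ⟨B, hB, hxB⟩ := (hmem x).mp (Finset.mem_singleton_self x)
    cases P with
    | nil => exact absurd hB List.not_mem_nil
    | cons A P' =>
      cases P' with
      | nil => rw [hblock A (by simp)]
      | cons A' P'' =>
        have h1 : A = {x} := hblock A (by simp)
        have h2 : A' = {x} := hblock A' (by simp)
        have := (List.pairwise_cons.mp hpw).1 A' (by simp)
        rw [h1, h2] at this
        simp [Finset.disjoint_left] at this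
  · rintro rfl
    exact ⟨by simp, by simp, fun y => by simp⟩

lemma good_exists : ∀ (S : Finset (Fin n)), S.Nonempty →
    ∃ ps : List (List (Finset (Fin n))), Good S ps := by
  intro S
  induction S using Finset.induction_on with
  | empty => rintro ⟨a, ha⟩; exact absurd ha (Finset.notMem_empty a)
  | @insert x T hxT ih =>
    intro _
    rcases T.eq_empty_or_nonempty with rfl | hT
    · -- base case : `S = {x}`
      refine ⟨[[{x}]], ?_, ?_, ?_, ?_, ?_, ?_⟩
      · intro P
        simp only [List.mem_singleton]
        rw [show insert x (∅ : Finset (Fin n)) = {x} from rfl]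
        exact ⟨fun h => h ▸ isOSPOn_singleton.mpr rfl, fun h => isOSPOn_singleton.mp h⟩
      · simp
      · simp [List.Chain']
      · rfl
      · exact ⟨[{x}], rfl, by simp⟩
      · exact ⟨[{x}], rfl, by simp, by simp⟩
    · obtain ⟨ps, hmem, hnd, hch, hlen, ⟨h0, hh0, hh0perm⟩, ⟨t0, ht0, ht0perm, _⟩⟩ := ih hT
      have hosp : ∀ P ∈ ps, IsOSPOn T P := fun P hP => (hmem P).mp hP
      have hne : ∀ P ∈ ps, ∀ B ∈ P, B.Nonempty := fun P hP => (hosp P hP).1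
      have hxblocks : ∀ P ∈ ps, ∀ B ∈ P, x ∉ B :=
        fun P hP => x_not_mem_blocks hxT (hosp P hP)
      have hps_ne : ps ≠ [] := by
        intro h; rw [h] at hh0; simp at hh0
      refine ⟨bous x false ps, ?_, ?_, ?_, ?_, ?_, ?_⟩
      · intro Q
        rw [mem_bous]
        constructor
        · rintro ⟨P, hP, hQ⟩
          exact isOSPOn_extL hxT (hosp P hP) hQ
        · intro hQ
          obtain ⟨P, hP, hQ'⟩ := exists_extL_of_isOSPOn hxT hQ
          exact ⟨P, (hmem P).mpr hP, hQ'⟩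
      · exact bous_nodup x ps false hnd hne hxblocks
      · exact bous_chain' x ps false hch
      · rw [bous_length_parity]; exact hlen
      · -- head
        cases ps with
        | nil => exact absurd rfl hps_ne
        | cons P psr =>
          rw [bous_head? x P psr]
          refine ⟨{x} :: P, rfl, ?_⟩
          intro B hB
          rcases List.mem_cons.mp hB with rfl | hB
          · simp
          · have : P = h0 := by
              simpa using hh0
            exact hh0perm B (this ▸ hB)
      · -- getLast
        obtain ⟨hL, _⟩ := bous_getLast? x ps t0 ht0
        rw [hlen] at hL
        simp only [if_pos rfl] at hL
        refine ⟨t0 ++ [{x}], hL, ?_, ?_⟩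
        · intro B hB
          rcases List.mem_append.mp hB with h | h
          · exact ht0perm B h
          · rw [List.mem_singleton.mp h]; simp
        · intro _
          -- head is `{x} :: P₁`, last is `t0 ++ [{x}]`; they differ
          cases ps with
          | nil => exact absurd rfl hps_ne
          | cons P psr =>
            rw [bous_head? x P psr]
            intro hcon
            simp only [Option.some.injEq] at hcon
            -- t0 is an OSP of the nonempty T, so t0 ≠ [] and its first block avoids x
            have ht0mem := List.mem_of_mem_getLast? (Option.mem_def.mpr ht0)
            have ht0osp : IsOSPOn T t0 := hosp t0 ht0mem
            obtain ⟨y, hy⟩ := hT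
            obtain ⟨C, hC, -⟩ := (ht0osp.2.2 y).mp hy
            cases t0 with
            | nil => exact absurd hC List.not_mem_nil
            | cons C0 t0' =>
              simp only [List.cons_append, List.cons.injEq] at hcon
              have hxC0 : x ∉ C0 := hxblocks _ ht0mem C0 List.mem_cons_self
              exact hxC0 (hcon.1 ▸ Finset.mem_singleton_self x)

/-- Build a walk from a chain of adjacent vertices. -/
def walkOfChain {V : Type*} {G : SimpleGraph V} : (a : V) → (l : List V) →
    List.Chain G.Adj a l → G.Walk a (l.getLastD a)
  | _, [], _ => SimpleGraph.Walk.nil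
  | a, b :: l, h =>
    (SimpleGraph.Walk.cons (List.chain_cons.mp h).1
      (walkOfChain b l (List.chain_cons.mp h).2)).copy rfl (List.getLastD_cons (a := a) (b := b) (l := l)).symm

lemma walkOfChain_support {V : Type*} {G : SimpleGraph V} :
    ∀ (a : V) (l : List V) (h : List.Chain G.Adj a l),
    (walkOfChain a l h).support = a :: l := by
  intro a l
  induction l generalizing a with
  | nil => intro h; rfl
  | cons b l ih =>
    intro h
    rw [walkOfChain]
    rw [SimpleGraph.Walk.support_copy, SimpleGraph.Walk.support_cons]
    exact congrArg (a :: ·) (ih b _)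

lemma walkOfChain_edges {V : Type*} {G : SimpleGraph V} :
    ∀ (a : V) (l : List V) (h : List.Chain G.Adj a l),
    (walkOfChain a l h).edges = List.zipWith (fun a b => s(a, b)) (a :: l) l := by
  intro a l
  induction l generalizing a with
  | nil => intro h; rfl
  | cons b l ih =>
    intro h
    rw [walkOfChain]
    rw [SimpleGraph.Walk.edges_copy, SimpleGraph.Walk.edges_cons]
    exact congrArg (s(a, b) :: ·) (ih b _)

lemma chain'_of_mem {α : Type*} {R S : α → α → Prop} :
    ∀ {l : List α}, (∀ a ∈ l, ∀ b ∈ l, R a b → S a b) → l.Chain' R → l.Chain' S := by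
  intro l
  induction l with
  | nil => intro _ _; simp [List.Chain']
  | cons a l ih =>
    intro hm hc
    cases l with
    | nil => simp [List.Chain']
    | cons b l =>
      simp only [List.Chain', List.isChain_cons_cons] at hc ⊢
      exact ⟨hm a (by simp) b (by simp) hc.1,
        ih (fun p hp q hq => hm p (by simp [hp]) q (by simp [hq])) hc.2⟩

lemma aux_none_edge {β : Type*} :
    ∀ (l : List (Option β)), (∀ u ∈ l, u ≠ none) →
    ∀ e ∈ List.zipWith (fun a b => s(a, b)) (l ++ [(none : Option β)]) ((l ++ [(none : Option β)]).tail),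
      none ∈ e → ∃ u ∈ l.getLast?, e = s(u, none) := by
  intro l
  induction l with
  | nil => intro _ e he _; simp at he
  | cons u l ih =>
    intro hl e he hne
    cases l with
    | nil =>
      simp only [List.cons_append, List.nil_append, List.tail_cons, List.zipWith,
        List.mem_singleton] at he
      exact ⟨u, by simp, he⟩
    | cons u' l' =>
      simp only [List.cons_append, List.tail_cons, List.zipWith, List.mem_cons] at he
      rcases he with rfl | he
      · rcases Sym2.mem_iff.mp hne with h | h
        · exact absurd h.symm (hl u (by simp))
        · exact absurd h.symm (hl u' (by simp))
      · obtain ⟨w, hw, hwe⟩ := ih (fun v hv => hl v (by simp [hv])) e he hne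
        refine ⟨w, ?_, hwe⟩
        rw [aux_getLast?_cons u (by simp)]
        exact hw

end PermFace

open PermFace in
/-- For every `n ≥ 2`, the cover graph of the face lattice of the permutahedron `Π_n`
has a Hamiltonian cycle. -/
theorem permFaceGraph_hamiltonian_cycle (n : ℕ) (hn : 2 ≤ n) :
    ∃ (v : Option {P : List (Finset (Fin n)) // IsOSP n P})
      (c : (permFaceGraph n).Walk v v), c.IsHamiltonianCycle := by

  classical
  have hn0 : 0 < n := by omega
  obtain ⟨ps, hmem, hnd, hch, hlen, ⟨h0, hh0, hh0perm⟩, ⟨t0, ht0, ht0perm, hne_ht⟩⟩ :=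
    good_exists (n := n) Finset.univ ⟨⟨0, hn0⟩, Finset.mem_univ _⟩
  have hcard : 1 < (Finset.univ : Finset (Fin n)).card := by
    rw [Finset.card_univ, Fintype.card_fin]; omega
  have hht : ps.head? ≠ some t0 := hne_ht hcard
  set V := Option {P : List (Finset (Fin n)) // IsOSP n P} with hV
  set G := permFaceGraph n with hG
  -- every member of ps is an OSP
  have hosp : ∀ P ∈ ps, IsOSP n P := fun P hP => isOSPOn_univ_iff.mp ((hmem P).mp hP)
  set g : List (Finset (Fin n)) → V := fun P =>
    if h : IsOSP n P then some ⟨P, h⟩ else none with hgdef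
  have hg : ∀ P (h : IsOSP n P), g P = some ⟨P, h⟩ := by
    intro P h
    simp only [hgdef, dif_pos h]
  have hg_ne_none : ∀ P ∈ ps, g P ≠ none := by
    intro P hP
    rw [hg P (hosp P hP)]
    simp
  -- adjacency transfer
  have hadjg : ∀ P ∈ ps, ∀ Q ∈ ps, AdjM P Q → G.Adj (g P) (g Q) := by
    intro P hP Q hQ hPQ
    rw [hg P (hosp P hP), hg Q (hosp Q hQ), hG, permFaceGraph, SimpleGraph.fromRel_adj]
    constructor
    · intro hc
      simp only [Option.some.injEq, Subtype.mk.injEq] at hc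
      exact hPQ.ne hc
    · rcases hPQ with h | h
      · exact Or.inl h
      · exact Or.inr h
  set vs : List V := ps.map g with hvs
  have hvs_nodup : vs.Nodup := by
    refine List.Nodup.map_on ?_ hnd
    intro P hP Q hQ hPQ
    rw [hg P (hosp P hP), hg Q (hosp Q hQ)] at hPQ
    exact congrArg Subtype.val (Option.some_injective _ hPQ)
  have hnone_vs : (none : V) ∉ vs := by
    intro hc
    obtain ⟨P, hP, hPc⟩ := List.mem_map.mp hc
    exact hg_ne_none P hP hPc
  have hvs_chain : vs.Chain' G.Adj := by
    rw [hvs]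
    unfold List.Chain'
    rw [List.isChain_map]
    exact chain'_of_mem (fun a ha b hb hab => hadjg a ha b hb hab) hch
  -- ps is nonempty
  cases hps : ps with
  | nil => rw [hps] at hh0; simp at hh0
  | cons P1 tl =>
  rw [hps] at hh0 hmem hch hnd hosp ht0 hht
  have hP1 : IsOSP n P1 := hosp P1 (by simp)
  have hP1h0 : P1 = h0 := by simpa using hh0
  have hv1 : g P1 = some ⟨P1, hP1⟩ := hg P1 hP1
  -- the full chain with ⊥ appended
  have ht0' : t0 ∈ P1 :: tl := List.mem_of_mem_getLast? (Option.mem_def.mpr ht0)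
  have ht0osp : IsOSP n t0 := hosp t0 ht0'
  have hlastvs : vs.getLast? = some (g t0) := by
    rw [hvs, List.getLast?_map, hps, ht0]
    rfl
  have hadj_last : G.Adj (g t0) none := by
    rw [hg t0 ht0osp, hG, permFaceGraph, SimpleGraph.fromRel_adj]
    refine ⟨by simp, Or.inr ?_⟩
    show ∀ B ∈ t0, B.card = 1
    exact ht0perm
  have hchain_full : (vs ++ [(none : V)]).Chain' G.Adj := by
    unfold List.Chain'
    rw [List.isChain_append]
    refine ⟨hvs_chain, by simp, ?_⟩
    intro a ha q hq
    simp only [List.head?_cons, Option.mem_def, Option.some.injEq] at hq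
    rw [hlastvs] at ha
    simp only [Option.mem_def, Option.some.injEq] at ha
    subst ha; subst hq
    exact hadj_last
  have hvs_eq : vs = g P1 :: tl.map g := by rw [hvs, hps, List.map_cons]
  have hchain2 : List.Chain G.Adj (g P1) (tl.map g ++ [(none : V)]) := by
    have h2 := hchain_full
    rw [hvs_eq, List.cons_append] at h2
    exact h2
  -- build the path from g P1 to none
  let p0 := walkOfChain (G := G) (g P1) (tl.map g ++ [(none : V)]) hchain2
  have hend : (tl.map g ++ [(none : V)]).getLastD (g P1) = none := List.getLastD_concat
  let p : G.Walk (g P1) none := p0.copy rfl hend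
  have hpsupp : p.support = vs ++ [none] := by
    show (p0.copy rfl hend).support = _
    rw [SimpleGraph.Walk.support_copy, walkOfChain_support, hvs_eq]
    rfl
  have hpedges : p.edges =
      List.zipWith (fun a b => s(a, b)) (vs ++ [(none : V)]) ((vs ++ [(none : V)]).tail) := by
    show (p0.copy rfl hend).edges = _
    rw [SimpleGraph.Walk.edges_copy, walkOfChain_edges, hvs_eq]
    rfl
  have hadj_first : G.Adj none (g P1) := by
    rw [hv1, hG, permFaceGraph, SimpleGraph.fromRel_adj]
    refine ⟨by simp, Or.inl ?_⟩
    show ∀ B ∈ P1, B.card = 1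
    intro B hB
    exact hh0perm B (hP1h0 ▸ hB)
  let c : G.Walk none none := SimpleGraph.Walk.cons hadj_first p
  refine ⟨none, c, ?_⟩
  have hnodup_full : (vs ++ [(none : V)]).Nodup := by
    rw [List.nodup_append]
    exact ⟨hvs_nodup, by simp, by
      intro a ha b hb
      simp only [List.mem_singleton] at hb
      exact fun hab => hnone_vs (hb ▸ hab ▸ ha)⟩
  rw [SimpleGraph.Walk.isHamiltonianCycle_iff_isCycle_and_support_count_tail_eq_one]
  constructor
  · rw [SimpleGraph.Walk.cons_isCycle_iff]
    constructor
    · refine SimpleGraph.Walk.IsPath.mk' ?_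
      rw [hpsupp]
      exact hnodup_full
    · intro hc
      rw [hpedges] at hc
      obtain ⟨u, hu, hue⟩ := aux_none_edge vs (fun u hu => by
          intro hc2
          exact hnone_vs (hc2 ▸ hu)) _ hc (Sym2.mem_mk_left _ _)
      rw [hlastvs] at hu
      simp only [Option.mem_def, Option.some.injEq] at hu
      subst hu
      rw [Sym2.eq_iff] at hue
      rcases hue with ⟨h1, h2⟩ | ⟨h1, h2⟩
      · rw [hv1] at h2; exact absurd h2 (Option.some_ne_none _)
      · rw [hv1, hg t0 ht0osp] at h2
        simp only [Option.some.injEq, Subtype.mk.injEq] at h2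
        exact hht (by rw [List.head?_cons, h2])
  · intro a
    have hsupp : c.support = none :: (vs ++ [none]) := by
      show (SimpleGraph.Walk.cons hadj_first p).support = _
      rw [SimpleGraph.Walk.support_cons, hpsupp]
    rw [hsupp, List.tail_cons]
    refine @List.count_eq_one_of_mem _ instBEqOfDecidableEq _ _ _ hnodup_full ?_
    cases a with
    | none => simp
    | some q =>
      obtain ⟨P, hPosp⟩ := q
      have hPps : P ∈ ps := by
        rw [hps]
        exact (hmem P).mpr (isOSPOn_univ_iff.mpr hPosp)
      have hmemvs : (some ⟨P, hPosp⟩ : V) ∈ vs := by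
        rw [hvs]
        exact List.mem_map.mpr ⟨P, hPps, hg P hPosp⟩
      exact List.mem_append.mpr (Or.inl hmemvs)
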